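/- Let the data cells be {x_(1),…,x_(M)} sorted in decreasing order of β_mle(x) = N_α(x)/N(x), and suppose the true affected set S^T = {x_(1),…,x_(t)} consists of the top t cells. Let r_mle(x) = β_mle(x) − α, and suppose all cells in S^T satisfy r_mle(x) > 0. Suppose the effect is ν-homogeneous with ν = r_mle(x_(1)) / R(r_mle(x_(1))) where, for the NA score, R(r) = r/2 (so ν = 2), i.e., max_{x∈S^T} r_mle(x) < 2·min_{x∈S^T} r_mle(x). Then for every cell x ∈ S^T, β_max(x) = 2β_mle(x) − α satisfies β_max(x) > β_mle(x') for all x' ∈ S^T; consequently, at β = max over subsets containing only cells of S^T of the pooled β_mle, every ω^NA(α, β, N_α(x), N(x)) for x ∈ S^T is strictly positive. -/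

import Mathlib

/-- Key step of the homogeneity theorem for the NA score (ν = 2): under
2-homogeneity of positive effects, every affected cell's upper root
`β_max(x) = 2·β_mle(x) − α` exceeds every affected cell's `β_mle(x')`, and the
ω^NA contribution of every affected cell is strictly positive at the pooled
`β_mle` of any nonempty subset of affected cells. -/
theorem homogeneity_key_step {ι : Type*} (ST : Finset ι) (hST : ST.Nonempty)
    (Nα N : ι → ℝ) (α : ℝ) (hα : α ∈ Set.Ioo (0:ℝ) 1)
    (hN : ∀ x ∈ ST, 0 < N x) (hNα : ∀ x ∈ ST, 0 ≤ Nα x)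
    (hr : ∀ x ∈ ST, 0 < Nα x / N x - α)
    (hhom : ∀ x ∈ ST, ∀ x' ∈ ST, Nα x / N x - α < 2 * (Nα x' / N x' - α)) :
    (∀ x ∈ ST, ∀ x' ∈ ST, Nα x' / N x' < 2 * (Nα x / N x) - α) ∧
    (∀ S ⊆ ST, S.Nonempty → ∀ x ∈ ST,
      0 < Nα x * ((∑ z ∈ S, Nα z) / (∑ z ∈ S, N z) - α) / (α * (1 - α)) +
          N x * (α^2 - ((∑ z ∈ S, Nα z) / (∑ z ∈ S, N z))^2) /
            (2 * α * (1 - α))) := by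

  obtain ⟨hα0, hα1⟩ := hα
  have h1α : (0:ℝ) < 1 - α := by linarith
  constructor
  · intro x hx x' hx'
    have := hhom x' hx' x hx
    linarith
  · intro S hS hSne x hx
    have hNx := hN x hx
    set b := Nα x / N x with hb
    have hbα : α < b := by have := hr x hx; linarith
    set β := (∑ z ∈ S, Nα z) / (∑ z ∈ S, N z) with hβ
    have hNS : 0 < ∑ z ∈ S, N z := Finset.sum_pos (fun z hz => hN z (hS hz)) hSne
    have hβα : α < β := by
      rw [hβ, lt_div_iff₀ hNS]
      have h : ∀ z ∈ S, α * N z < Nα z := by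
        intro z hz
        have h1 := hr z (hS hz)
        have hNz := hN z (hS hz)
        have h2 : α < Nα z / N z := by linarith
        calc α * N z < (Nα z / N z) * N z := mul_lt_mul_of_pos_right h2 hNz
          _ = Nα z := div_mul_cancel₀ _ hNz.ne'
      calc α * ∑ z ∈ S, N z = ∑ z ∈ S, α * N z := Finset.mul_sum _ _ _
        _ < ∑ z ∈ S, Nα z := Finset.sum_lt_sum_of_nonempty hSne h
    have hβtop : β < 2 * b - α := by
      obtain ⟨x', hx', hmax⟩ := S.exists_max_image (fun z => Nα z / N z) hSne
      have hb' : Nα x' / N x' < 2 * b - α := by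
        have := hhom x' (hS hx') x hx
        linarith
      have hβle : β ≤ Nα x' / N x' := by
        rw [hβ, div_le_iff₀ hNS]
        calc ∑ z ∈ S, Nα z ≤ ∑ z ∈ S, (Nα x' / N x') * N z := by
              apply Finset.sum_le_sum
              intro z hz
              have hNz := hN z (hS hz)
              have hm := hmax z hz
              calc Nα z = (Nα z / N z) * N z := (div_mul_cancel₀ _ hNz.ne').symm
                _ ≤ (Nα x' / N x') * N z := mul_le_mul_of_nonneg_right hm hNz.le
          _ = (Nα x' / N x') * ∑ z ∈ S, N z := (Finset.mul_sum _ _ _).symm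
      linarith
    have key : Nα x * (β - α) / (α * (1 - α)) + N x * (α^2 - β^2) / (2*α*(1-α))
        = N x * ((β - α) * ((2*b - α) - β)) / (2*α*(1-α)) := by
      have hx' : Nα x = b * N x := by rw [hb]; field_simp
      rw [hx']
      field_simp
      ring
    rw [key]
    apply div_pos
    · exact mul_pos hNx (mul_pos (by linarith) (by linarith))
    · have : (0:ℝ) < 2*α := by linarith
      exact mul_pos this h1α
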